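/- arXiv:1308.3529 — 2 statements merged into one kernel-verified Lean document; each statement's English description precedes it below -/
import Mathlib

section
/- Fix J ⊆ I_0. If w ∈ W_0^J and β ∈ Δ_0^+ ∖ Δ_J^+ satisfy ℓ(⌊wr_β⌋) = ℓ(w) + 1, then wr_β ∈ W_0^J (so that ⌊wr_β⌋ = wr_β). -/
noncomputable section

open Classical

/-! ## Generic path and root-operator machinery -/

/-- The unit interval `[0,1] ⊆ ℝ`, the common domain of all paths. -/
abbrev UnitItv : Type := Set.Icc (0 : ℝ) 1

/-- Clamp a real number into `[0,1]`. -/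
def clamp (r : ℝ) : UnitItv := Set.projIcc 0 1 zero_le_one r

/-- The point `0 ∈ [0,1]`. -/
def pt0 : UnitItv := ⟨0, by norm_num⟩

/-- The point `1 ∈ [0,1]`. -/
def pt1 : UnitItv := ⟨1, by norm_num⟩

section RootOps

variable {V : Type*} [AddCommGroup V] [Module ℝ V]

/-- `mval co η` is `m^η = min{ co(η(t)) : t ∈ [0,1] }`. -/
def mval (co : V → ℝ) (η : UnitItv → V) : ℝ :=
  sInf (Set.range fun t : UnitItv => co (η t))

/-- All local minima of the function `t ↦ co (η t)` on `[0,1]` are integers. -/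
def IntLocMin (co : V → ℝ) (η : UnitItv → V) : Prop :=
  ∀ r ∈ Set.Icc (0:ℝ) 1,
    IsLocalMinOn (fun u : ℝ => co (η (clamp u))) (Set.Icc (0:ℝ) 1) r →
      ∃ n : ℤ, co (η (clamp r)) = (n : ℝ)

/-- `η` is piecewise linear on `[0,1]`. -/
def IsPL (η : UnitItv → V) : Prop :=
  ∃ (s : ℕ) (σ : ℕ → ℝ) (v : ℕ → V), 1 ≤ s ∧ σ 0 = 0 ∧ σ s = 1 ∧
    (∀ k < s, σ k < σ (k+1)) ∧
    ∀ k, 1 ≤ k → k ≤ s → ∀ t : UnitItv, σ (k-1) ≤ (t:ℝ) → (t:ℝ) ≤ σ k →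
      η t = η (clamp (σ (k-1))) + ((t:ℝ) - σ (k-1)) • v k

/-- `η` is a path with weight in the lattice `Pcl`: a piecewise-linear
continuous map with `η(0) = 0` and `η(1) ∈ Pcl`. -/
def IsPath (Pcl : AddSubgroup V) (η : UnitItv → V) : Prop :=
  η pt0 = 0 ∧ η pt1 ∈ Pcl ∧ IsPL η

/-- The reflection `v ↦ v − ⟨v, a^∨⟩ a`, where `co = ⟨·, a^∨⟩`. -/
def reflBy (co : V → ℝ) (a : V) (v : V) : V := v - co v • a

/-- `t₀ = max{ t ∈ [0,1] : H(t) = m }` in the definition of `f_j`. -/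
def fT0 (co : V → ℝ) (η : UnitItv → V) : ℝ :=
  sSup {r : ℝ | r ∈ Set.Icc (0:ℝ) 1 ∧ co (η (clamp r)) = mval co η}

/-- `t₁ = min{ t ∈ [t₀,1] : H(t) = m + 1 }` in the definition of `f_j`. -/
def fT1 (co : V → ℝ) (η : UnitItv → V) : ℝ :=
  sInf {r : ℝ | r ∈ Set.Icc (fT0 co η) 1 ∧ co (η (clamp r)) = mval co η + 1}

/-- The path `f_j η` (in the non-vanishing case). -/
def fRaw (co : V → ℝ) (a : V) (η : UnitItv → V) : UnitItv → V := fun t =>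
  if (t:ℝ) ≤ fT0 co η then η t
  else if (t:ℝ) ≤ fT1 co η then
    η (clamp (fT0 co η)) + reflBy co a (η t - η (clamp (fT0 co η)))
  else η t - a

/-- The root operator `f_j` (with `co = ⟨·, α_j^∨⟩`, `a = α_j`), acting on
paths together with the extra element `0` (encoded by `Option`, `none = 0`). -/
def fOp (co : V → ℝ) (a : V) : Option (UnitItv → V) → Option (UnitItv → V) :=
  fun o => o.bind fun η =>
    if co (η pt1) - mval co η = 0 then none else some (fRaw co a η)

/-- `t₁ = min{ t ∈ [0,1] : H(t) = m }` in the definition of `e_j`. -/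
def eT1 (co : V → ℝ) (η : UnitItv → V) : ℝ :=
  sInf {r : ℝ | r ∈ Set.Icc (0:ℝ) 1 ∧ co (η (clamp r)) = mval co η}

/-- `t₀ = max{ t ∈ [0,t₁] : H(t) = m + 1 }` in the definition of `e_j`. -/
def eT0 (co : V → ℝ) (η : UnitItv → V) : ℝ :=
  sSup {r : ℝ | r ∈ Set.Icc (0:ℝ) (eT1 co η) ∧ co (η (clamp r)) = mval co η + 1}

/-- The path `e_j η` (in the non-vanishing case). -/
def eRaw (co : V → ℝ) (a : V) (η : UnitItv → V) : UnitItv → V := fun t =>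
  if (t:ℝ) ≤ eT0 co η then η t
  else if (t:ℝ) ≤ eT1 co η then
    η (clamp (eT0 co η)) + reflBy co a (η t - η (clamp (eT0 co η)))
  else η t + a

/-- The root operator `e_j` (with `co = ⟨·, α_j^∨⟩`, `a = α_j`). -/
def eOp (co : V → ℝ) (a : V) : Option (UnitItv → V) → Option (UnitItv → V) :=
  fun o => o.bind fun η =>
    if mval co η = 0 then none else some (eRaw co a η)

/-- `ε_j(η) = max{ n ≥ 0 : e_j^n η ≠ 0 }`. -/
def epsV (co : V → ℝ) (a : V) (η : UnitItv → V) : ℕ :=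
  sSup {n : ℕ | (eOp co a)^[n] (some η) ≠ none}

/-- `φ_j(η) = max{ n ≥ 0 : f_j^n η ≠ 0 }`. -/
def phiV (co : V → ℝ) (a : V) (η : UnitItv → V) : ℕ :=
  sSup {n : ℕ | (fOp co a)^[n] (some η) ≠ none}

/-- The concatenation `η_1 * η_2 * ⋯ * η_n` of the paths `η 1, …, η n`. -/
def catN (n : ℕ) (η : ℕ → (UnitItv → V)) : UnitItv → V :=
  fun t => ∑ l ∈ Finset.Icc 1 n, η l (clamp (n * (t:ℝ) - l + 1))

/-- The set `B^{*n}` of `n`-fold concatenations of elements of `B`. -/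
def catSet (B : Set (UnitItv → V)) (n : ℕ) : Set (UnitItv → V) :=
  {g | ∃ η : ℕ → (UnitItv → V), (∀ l, 1 ≤ l → l ≤ n → η l ∈ B) ∧ g = catN n η}

end RootOps
/-! ## The finite Weyl group, root system and parabolic quantum Bruhat graph -/

/-- Data of the finite Weyl group `W_0` (as a Coxeter system), acting on the
classical weight space `V`, together with its finite crystallographic root
system `Δ_0` with positive roots, highest root `θ`, the reflections `r_β`,
the pairing `pair μ β = ⟨μ, β^∨⟩`, the level-zero dominant weight
`Λ = cl(λ)`, and the lattice `P_cl`. -/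
structure QBGSetting where
  I0 : Type
  [finI0 : Fintype I0]
  M : CoxeterMatrix I0
  W : Type
  [grpW : Group W]
  /-- `W` with its simple reflections `r_j`, `j ∈ I_0`, is a Coxeter system -/
  cs : CoxeterSystem M W
  V : Type
  [acgV : AddCommGroup V]
  [modV : Module ℝ V]
  /-- the action of `W_0` on `V` -/
  rep : W →* (V ≃ₗ[ℝ] V)
  /-- the simple roots -/
  α : I0 → V
  /-- `pair μ β = ⟨μ, β^∨⟩` for roots `β` -/
  pair : V →ₗ[ℝ] (V → ℝ)
  /-- `rroot β = r_β`, the reflection in the root `β` -/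
  rroot : V → W
  /-- the set of roots `Δ_0` -/
  roots : Set V
  /-- the set of positive roots `Δ_0^+` -/
  pos : Set V
  /-- the highest root of `Δ_0` -/
  θ : V
  /-- the level-zero dominant weight `Λ = cl(λ)` -/
  Λ : V
  /-- the lattice `P_cl` -/
  Pcl : AddSubgroup V
  -- axioms
  rep_faithful : Function.Injective rep
  roots_def : roots = {v : V | ∃ (w : W) (j : I0), rep w (α j) = v}
  simple_apply : ∀ (j : I0) (v : V), rep (cs.simple j) v = v - pair v (α j) • α j
  rroot_simple : ∀ j : I0, rroot (α j) = cs.simple j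
  rroot_conj : ∀ (w : W) (β : V), β ∈ roots → rroot (rep w β) = w * rroot β * w⁻¹
  rroot_apply : ∀ β ∈ roots, ∀ u : V, rep (rroot β) u = u - pair u β • β
  α_pos : ∀ j, α j ∈ pos
  pos_sub : pos ⊆ roots
  roots_pm : ∀ v ∈ roots, v ∈ pos ∨ -v ∈ pos
  pos_not_neg : ∀ v ∈ pos, -v ∉ pos
  roots_finite : roots.Finite
  pair_self : ∀ v ∈ roots, pair v v = 2
  pair_cryst : ∀ u ∈ roots, ∀ v ∈ roots, ∃ n : ℤ, pair u v = (n : ℝ)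
  pair_equivar : ∀ (w : W) (μ β : V), pair (rep w μ) (rep w β) = pair μ β
  θ_pos : θ ∈ pos
  θ_high : ∀ β ∈ pos, θ - β ∈ AddSubmonoid.closure (Set.range α)
  Λ_dom : ∀ j, 0 ≤ pair Λ (α j)
  Λ_int : ∀ j, ∃ n : ℤ, pair Λ (α j) = (n : ℝ)
  Λ_mem : Λ ∈ Pcl
  α_mem : ∀ j, α j ∈ Pcl
  pair_Pcl_int : ∀ v ∈ Pcl, ∀ β ∈ roots, ∃ n : ℤ, pair v β = (n : ℝ)

attribute [instance] QBGSetting.finI0 QBGSetting.grpW QBGSetting.acgV QBGSetting.modV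

namespace QBGSetting

variable (S : QBGSetting)

/-- The parabolic subgroup `W_J = ⟨r_j : j ∈ J⟩`. -/
def WJ (J : Set S.I0) : Subgroup S.W := Subgroup.closure (S.cs.simple '' J)

/-- The set `W_0^J` of minimal-length coset representatives for `W_0/W_J`. -/
def W0J (J : Set S.I0) : Set S.W :=
  {w | ∀ u ∈ S.WJ J, S.cs.length w ≤ S.cs.length (w * u)}

/-- The canonical projection `⌊·⌋ : W_0 → W_0^J`: the minimal-length
representative of the coset `w W_J`. -/
noncomputable def mcr (J : Set S.I0) (w : S.W) : S.W :=
  Classical.epsilon fun x => (∃ u ∈ S.WJ J, x = w * u) ∧ x ∈ S.W0J J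

/-- The lattice `⊕_{j ∈ J} ℤ α_j` (so that `Δ_J = Δ_0 ∩ ZJ`). -/
def ZJ (J : Set S.I0) : AddSubgroup S.V := AddSubgroup.closure (S.α '' J)

/-- `Q_0 = ⊕_{j ∈ I_0} ℤ α_j`. -/
def Q0 : AddSubgroup S.V := AddSubgroup.closure (Set.range S.α)

/-- `ρ = (1/2) ∑_{β ∈ Δ_0^+} β`. -/
noncomputable def ρ : S.V :=
  (2⁻¹ : ℝ) • ∑ β ∈ (S.roots_finite.subset S.pos_sub).toFinset, β

/-- `ρ_J = (1/2) ∑_{β ∈ Δ_J^+} β`. -/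
noncomputable def ρJ (J : Set S.I0) : S.V :=
  (2⁻¹ : ℝ) • ∑ β ∈ ((S.roots_finite.subset S.pos_sub).subset
    (fun _ h => h.1) (t := {β | β ∈ S.pos ∧ β ∈ S.ZJ J})).toFinset, β

/-- There is an edge `⌊w r_β⌋ ←β— w` in the parabolic quantum Bruhat graph:
`w ∈ W_0^J`, `β ∈ Δ_0^+ ∖ Δ_J^+`, and either (i) `ℓ(⌊w r_β⌋) = ℓ(w) + 1`
(Bruhat edge) or (ii) `ℓ(⌊w r_β⌋) = ℓ(w) − 2⟨ρ − ρ_J, β^∨⟩ + 1`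
(quantum edge). -/
def edge (J : Set S.I0) (w : S.W) (β : S.V) : Prop :=
  w ∈ S.W0J J ∧ β ∈ S.pos ∧ β ∉ S.ZJ J ∧
    (S.cs.length (S.mcr J (w * S.rroot β)) = S.cs.length w + 1 ∨
     (S.cs.length (S.mcr J (w * S.rroot β)) : ℝ) =
       (S.cs.length w : ℝ) - 2 * S.pair (S.ρ - S.ρJ J) β + 1)

/-- There is an edge `w' ←β— w` with `w' = ⌊w r_β⌋`. -/
def hasEdge (J : Set S.I0) (w' w : S.W) (β : S.V) : Prop :=
  S.edge J w β ∧ w' = S.mcr J (w * S.rroot β)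

/-- `w, β` (with `w k` the vertices and `β (k+1)` the labels) is a directed
path `x = w_0 ←β_1— w_1 ←β_2— ⋯ ←β_n— w_n = y` from `y` to `x` in the
parabolic quantum Bruhat graph. -/
def IsDPath (J : Set S.I0) (n : ℕ) (w : ℕ → S.W) (β : ℕ → S.V)
    (x y : S.W) : Prop :=
  w 0 = x ∧ w n = y ∧ ∀ k < n, S.hasEdge J (w k) (w (k+1)) (β (k+1))

/-- `ℓ(x ⇐ y)`: the minimal length of a directed path from `y` to `x`. -/
noncomputable def lenQ (J : Set S.I0) (x y : S.W) : ℕ :=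
  sInf {n : ℕ | ∃ w β, S.IsDPath J n w β x y}

/-- A directed `σ`-path from `y` to `x`: a directed path all of whose labels
`β_k` satisfy `σ ⟨Λ, β_k^∨⟩ ∈ ℤ`. -/
def IsDSPath (J : Set S.I0) (σ : ℝ) (n : ℕ) (w : ℕ → S.W) (β : ℕ → S.V)
    (x y : S.W) : Prop :=
  S.IsDPath J n w β x y ∧ ∀ k < n, ∃ m : ℤ, σ * S.pair S.Λ (β (k+1)) = (m : ℝ)

/-- `J = { j ∈ I_0 : ⟨Λ, α_j^∨⟩ = 0 }`. -/
def JΛ : Set S.I0 := {j | S.pair S.Λ (S.α j) = 0}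

/-- The pairing `⟨·, α_j^∨⟩` for the affine index `j ∈ I = I_0 ∪ {0}`
(`none` is the distinguished vertex `0`, and `⟨μ, α_0^∨⟩ = −⟨μ, θ^∨⟩`). -/
def acoroot : Option S.I0 → S.V → ℝ
  | some j => fun v => S.pair v (S.α j)
  | none => fun v => -(S.pair v S.θ)

/-- The class in `P_cl` of the simple root `α_j`, `j ∈ I = I_0 ∪ {0}`
(for `j = 0` it is `α_0 = −θ`). -/
def aα : Option S.I0 → S.V
  | some j => S.α j
  | none => -S.θ

/-- `s_j := r_j` for `j ∈ I_0`, and `s_0 := r_θ ∈ W_0`. -/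
def saff : Option S.I0 → S.W
  | some j => S.cs.simple j
  | none => S.rroot S.θ

/-- For `j = 0`, the element `z ∈ W_J` with `r_θ w = ⌊r_θ w⌋ z`
(for `j ∈ I_0`, `z` is the identity). -/
noncomputable def zJof (J : Set S.I0) : Option S.I0 → S.W → S.W
  | some _ => fun _ => 1
  | none => fun w => (S.mcr J (S.rroot S.θ * w))⁻¹ * (S.rroot S.θ * w)

end QBGSetting

/-- A quantum Lakshmibai–Seshadri path of shape `λ` (Definition 3.5): a pair
`(x_1, …, x_s ; 0 = σ_0 < σ_1 < ⋯ < σ_s = 1)` of elements of `W_0^J` and of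
rational numbers, admitting a directed `σ_k`-path from `x_{k+1}` to `x_k` for
each `1 ≤ k ≤ s − 1`.  The set of these is `B̃(λ)_cl`. -/
structure QLSData (S : QBGSetting) where
  s : ℕ
  hs : 1 ≤ s
  x : ℕ → S.W
  σ : ℕ → ℚ
  x_mem : ∀ k, 1 ≤ k → k ≤ s → x k ∈ S.W0J S.JΛ
  x_ne : ∀ k, 1 ≤ k → k ≤ s - 1 → x k ≠ x (k+1)
  σ0 : σ 0 = 0
  σs : σ s = 1
  σ_mono : ∀ k < s, σ k < σ (k+1)
  chain : ∀ k, 1 ≤ k → k ≤ s - 1 →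
    ∃ (n : ℕ) (w : ℕ → S.W) (β : ℕ → S.V),
      S.IsDSPath S.JΛ (σ k : ℝ) n w β (x k) (x (k+1))

/-- The quantum LS path `η` is in `B̂(λ)_cl`: for each `k` there is a directed
`σ_k`-path from `x_{k+1}` to `x_k` of length `ℓ(x_k ⇐ x_{k+1})`. -/
def QLSData.IsShortest {S : QBGSetting} (d : QLSData S) : Prop :=
  ∀ k, 1 ≤ k → k ≤ d.s - 1 →
    ∃ (w : ℕ → S.W) (β : ℕ → S.V),
      S.IsDSPath S.JΛ (d.σ k : ℝ) (S.lenQ S.JΛ (d.x k) (d.x (k+1))) w β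
        (d.x k) (d.x (k+1))

/-- The piecewise-linear map `[0,1] → V` associated with a quantum LS path:
`η(t) = ∑_{l=1}^{k-1} (σ_l − σ_{l-1}) x_l Λ + (t − σ_{k-1}) x_k Λ` on
`[σ_{k-1}, σ_k]`. -/
noncomputable def QLSData.path {S : QBGSetting} (d : QLSData S) :
    UnitItv → S.V := fun t =>
  ∑ l ∈ Finset.Icc 1 d.s,
    (min (t : ℝ) (d.σ l : ℝ) - min (t : ℝ) (d.σ (l-1) : ℝ)) •
      (S.rep (d.x l) S.Λ)

/-- The set `B̃(λ)_cl` of quantum LS paths of shape `λ`, regarded as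
piecewise-linear maps. -/
def Btil (S : QBGSetting) : Set (UnitItv → S.V) :=
  {η | ∃ d : QLSData S, η = d.path}

/-- The set `B̂(λ)_cl ⊆ B̃(λ)_cl`, regarded as piecewise-linear maps. -/
def Bhat (S : QBGSetting) : Set (UnitItv → S.V) :=
  {η | ∃ d : QLSData S, d.IsShortest ∧ η = d.path}


/-! ## Auxiliary Coxeter-theoretic development (strong exchange, parabolic cosets) -/

namespace CoxAux


variable {B : Type*} {W : Type*} [Group W] {M : CoxeterMatrix B} (cs : CoxeterSystem M W)

local prefix:100 "σ" => cs.simple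
local prefix:100 "π" => cs.wordProd
local prefix:100 "ℓ" => cs.length

theorem swap_pow (a b : W) (m : ℕ) : a * (b * a) ^ m = (a * b) ^ m * a := by
  induction m with
  | zero => simp
  | succ m ih =>
    rw [pow_succ' (b * a) m, ← mul_assoc, show a * (b * a) = (a * b) * a by rw [mul_assoc],
      mul_assoc, ih, ← mul_assoc, ← pow_succ']

theorem entry2 (x y : W) (hx : x⁻¹ = x) (hy : y⁻¹ = y) (m : ℕ) :
    ((x * y) ^ m)⁻¹ * y * ((x * y) ^ m) = (y * x) ^ (2 * m) * y := by
  have h1 : ((x * y) ^ m)⁻¹ = (y * x) ^ m := by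
    rw [← inv_pow, mul_inv_rev, hx, hy]
  rw [h1, two_mul, pow_add (y * x) m m, mul_assoc ((y * x) ^ m) ((y * x) ^ m) y,
    mul_assoc ((y * x) ^ m) y ((x * y) ^ m), swap_pow y x m]

theorem entry1 (x y : W) (hx : x⁻¹ = x) (hy : y⁻¹ = y) (m : ℕ) :
    (y * (x * y) ^ m)⁻¹ * x * (y * (x * y) ^ m) = (y * x) ^ (2 * m + 1) * y := by
  have h1 : (y * (x * y) ^ m)⁻¹ = (y * x) ^ m * y := by
    rw [mul_inv_rev, ← inv_pow, mul_inv_rev, hx, hy]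
  have h2 : y * x * (y * x) ^ m = (y * x) ^ (m + 1) := (pow_succ' (y * x) m).symm
  calc (y * (x * y) ^ m)⁻¹ * x * (y * (x * y) ^ m)
      = (y * x) ^ m * (y * x * (y * (x * y) ^ m)) := by rw [h1]; group
    _ = (y * x) ^ m * (y * x * ((y * x) ^ m * y)) := by rw [swap_pow y x m]
    _ = (y * x) ^ m * ((y * x) ^ (m + 1) * y) := by rw [← mul_assoc (y * x), h2]
    _ = (y * x) ^ (2 * m + 1) * y := by
        rw [show 2 * m + 1 = m + (m + 1) by ring, pow_add (y * x) m (m + 1), mul_assoc]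

theorem ris_cons (i : B) (ω : List B) :
    cs.rightInvSeq (i :: ω) = ((π ω)⁻¹ * (σ i) * (π ω)) :: cs.rightInvSeq ω := rfl

/-- The sign-twisted conjugation map. -/
def nsig (i : B) : W × ℤˣ → W × ℤˣ :=
  fun p => (σ i * p.1 * σ i, if p.1 = σ i then -p.2 else p.2)

theorem nsig_cond (i : B) (t : W) : (σ i * t * σ i = σ i) ↔ (t = σ i) := by
  constructor
  · intro h
    have h2 := congrArg (fun z => σ i * z) h
    rw [← mul_assoc, ← mul_assoc, cs.simple_mul_simple_self, one_mul] at h2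
    rw [eq_inv_of_mul_eq_one_left h2, cs.inv_simple]
  · intro h; rw [h, cs.simple_mul_simple_self i, one_mul]

theorem nsig_involutive (i : B) : Function.Involutive (nsig cs i) := by
  intro p
  unfold nsig
  have h1 : σ i * (σ i * p.1 * σ i) * σ i = p.1 := by
    rw [← mul_assoc, ← mul_assoc, cs.simple_mul_simple_self i, one_mul,
      mul_assoc, cs.simple_mul_simple_self i, mul_one]
  ext
  · exact h1
  · simp only
    by_cases hc : p.1 = σ i
    · rw [if_pos hc, if_pos ((nsig_cond cs i p.1).mpr hc)]; simp
    · rw [if_neg hc, if_neg (fun h => hc ((nsig_cond cs i p.1).mp h))]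

/-- Iterated `nsig` over a word. -/
def Fn (ω : List B) : W × ℤˣ → W × ℤˣ := ω.foldr (fun i g => nsig cs i ∘ g) id

theorem Fn_cons (i : B) (ω : List B) : Fn cs (i :: ω) = nsig cs i ∘ Fn cs ω := rfl

theorem Fn_apply (ω : List B) (t : W) (ε : ℤˣ) :
    Fn cs ω (t, ε) = (π ω * t * (π ω)⁻¹, (-1 : ℤˣ) ^ ((cs.rightInvSeq ω).count t) * ε) := by
  induction ω with
  | nil => simp [Fn]
  | cons i ω ih =>
    rw [Fn_cons, Function.comp_apply, ih]
    unfold nsig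
    have hcond : (π ω * t * (π ω)⁻¹ = σ i) ↔ (t = (π ω)⁻¹ * σ i * π ω) := by
      constructor
      · intro h; rw [← h]; group
      · intro h; rw [h]; group
    rw [ris_cons, cs.wordProd_cons]
    simp only [List.count_cons, beq_iff_eq]
    ext
    · simp only [mul_inv_rev, cs.inv_simple]
      group
    · simp only
      by_cases hc : t = (π ω)⁻¹ * σ i * π ω
      · rw [if_pos (hcond.mpr hc), if_pos hc.symm, pow_succ, mul_assoc, neg_one_mul, mul_neg]
      · rw [if_neg (fun h => hc (hcond.mp h)), if_neg (fun h => hc h.symm), add_zero]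

/-- `nsig` as a permutation. -/
def nperm (i : B) : Equiv.Perm (W × ℤˣ) := (nsig_involutive cs i).toPerm

/-- Double alternating word `[i, j, i, j, ...]` of length `2m`. -/
def dblAlt (i j : B) : ℕ → List B
  | 0 => []
  | m + 1 => i :: j :: dblAlt i j m

theorem wordProd_dblAlt (i j : B) (m : ℕ) : π (dblAlt i j m) = (σ i * σ j) ^ m := by
  induction m with
  | zero => simp [dblAlt]
  | succ m ih =>
    show π (i :: j :: dblAlt i j m) = _
    rw [cs.wordProd_cons, cs.wordProd_cons, ih, pow_succ']
    group

/-- `altA k` = alternating product starting with `j` of odd length `2k+1`. -/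
def altA (i j : B) (k : ℕ) : W := (σ j * σ i) ^ k * σ j

theorem ris_dblAlt (i j : B) (m : ℕ) :
    cs.rightInvSeq (dblAlt i j m) = ((List.range (2 * m)).reverse).map (altA cs i j) := by
  induction m with
  | zero => simp [dblAlt]
  | succ m ih =>
    show cs.rightInvSeq (i :: j :: dblAlt i j m) = _
    rw [ris_cons, ris_cons, ih, cs.wordProd_cons, wordProd_dblAlt]
    have hr : (List.range (2 * (m + 1))).reverse
        = (2 * m + 1) :: (2 * m) :: (List.range (2 * m)).reverse := by
      rw [show 2 * (m + 1) = (2 * m + 1) + 1 by ring, List.range_succ, List.range_succ]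
      simp
    rw [hr, List.map_cons, List.map_cons]
    congr 1
    · exact entry1 (σ i) (σ j) (cs.inv_simple i) (cs.inv_simple j) m
    · congr 1
      exact entry2 (σ i) (σ j) (cs.inv_simple i) (cs.inv_simple j) m

theorem altA_period (i j : B) (k : ℕ) : altA cs i j (M i j + k) = altA cs i j k := by
  unfold altA
  rw [add_comm, pow_add, mul_assoc, cs.simple_mul_simple_pow' i j, one_mul]

theorem count_ris_dblAlt_even (i j : B) (t : W) :
    ∃ c, (cs.rightInvSeq (dblAlt i j (M i j))).count t = 2 * c := by
  rw [ris_dblAlt, List.map_reverse, List.count_reverse, two_mul (M i j), List.range_add,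
    List.map_append, List.count_append]
  have : ((List.range (M i j)).map (M i j + ·)).map (altA cs i j)
      = (List.range (M i j)).map (altA cs i j) := by
    rw [List.map_map]
    exact List.map_congr_left (fun k _ => altA_period cs i j k)
  rw [this]
  exact ⟨_, (two_mul _).symm⟩

theorem nperm_liftable : M.IsLiftable (nperm cs) := by
  intro i j
  refine Equiv.ext fun p => ?_
  rw [Equiv.Perm.one_apply]
  have hpow : ∀ m : ℕ, (((nperm cs i * nperm cs j) ^ m : Equiv.Perm (W × ℤˣ)) p)
      = Fn cs (dblAlt i j m) p := by
    intro m
    induction m with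
    | zero => simp [dblAlt, Fn]
    | succ m ih =>
      rw [pow_succ', Equiv.Perm.mul_apply, ih]
      show _ = Fn cs (i :: j :: dblAlt i j m) p
      rw [Fn_cons, Fn_cons, Equiv.Perm.mul_apply]
      rfl
  rw [hpow (M i j)]
  obtain ⟨t, ε⟩ := p
  rw [Fn_apply, wordProd_dblAlt, cs.simple_mul_simple_pow i j]
  obtain ⟨c, hc⟩ := count_ris_dblAlt_even cs i j t
  rw [hc, pow_mul]
  norm_num

/-- The sign homomorphism (Tits cocycle). -/
def signHom : W →* Equiv.Perm (W × ℤˣ) := cs.lift ⟨nperm cs, nperm_liftable cs⟩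

theorem signHom_wordProd (ω : List B) (p : W × ℤˣ) : signHom cs (π ω) p = Fn cs ω p := by
  induction ω with
  | nil => simp [Fn]
  | cons i ω ih =>
    rw [cs.wordProd_cons, map_mul, Equiv.Perm.mul_apply, ih, Fn_cons]
    show signHom cs (σ i) _ = _
    rw [signHom, cs.lift_apply_simple]
    rfl

/-- The sign `μ(w, t)`. -/
def mu (w t : W) : ℤˣ := (signHom cs w (t, 1)).2

theorem mu_eq_count (ω : List B) (t : W) :
    mu cs (π ω) t = (-1 : ℤˣ) ^ ((cs.rightInvSeq ω).count t) := by
  rw [mu, signHom_wordProd, Fn_apply, mul_one]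

theorem signHom_apply (w t : W) (ε : ℤˣ) :
    signHom cs w (t, ε) = (w * t * w⁻¹, mu cs w t * ε) := by
  obtain ⟨ω, -, rfl⟩ := cs.exists_reduced_word' w
  rw [signHom_wordProd, Fn_apply, mu_eq_count]

theorem mu_mul (w v t : W) : mu cs (w * v) t = mu cs w (v * t * v⁻¹) * mu cs v t := by
  show (signHom cs (w * v) (t, 1)).2 = _
  rw [map_mul, Equiv.Perm.mul_apply, signHom_apply cs v t 1, mul_one, signHom_apply]

theorem mu_one (t : W) : mu cs 1 t = 1 := by
  simpa using mu_eq_count cs [] t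

theorem mu_refl {t : W} (ht : cs.IsReflection t) : mu cs t t = -1 := by
  obtain ⟨v, i, rfl⟩ := ht
  have hsimple : mu cs (σ i) (σ i) = -1 := by
    have hr : cs.rightInvSeq [i] = [σ i] := by
      rw [ris_cons]
      simp
    simpa [hr] using mu_eq_count cs [i] (σ i)
  have key : mu cs v (σ i) * mu cs v⁻¹ (v * σ i * v⁻¹) = 1 := by
    have h1 := mu_mul cs v v⁻¹ (v * σ i * v⁻¹)
    rw [mul_inv_cancel, mu_one] at h1
    have hconj : v⁻¹ * (v * σ i * v⁻¹) * (v⁻¹)⁻¹ = σ i := by group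
    rw [hconj] at h1
    exact h1.symm
  have e1 : mu cs (v * (σ i * v⁻¹)) (v * σ i * v⁻¹)
      = mu cs v ((σ i * v⁻¹) * (v * σ i * v⁻¹) * (σ i * v⁻¹)⁻¹)
        * mu cs (σ i * v⁻¹) (v * σ i * v⁻¹) := mu_mul cs _ _ _
  have e2 : mu cs (σ i * v⁻¹) (v * σ i * v⁻¹)
      = mu cs (σ i) (v⁻¹ * (v * σ i * v⁻¹) * (v⁻¹)⁻¹) * mu cs v⁻¹ (v * σ i * v⁻¹) :=
    mu_mul cs _ _ _
  have c1 : (σ i * v⁻¹) * (v * σ i * v⁻¹) * (σ i * v⁻¹)⁻¹ = σ i := by group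
  have c2 : v⁻¹ * (v * σ i * v⁻¹) * (v⁻¹)⁻¹ = σ i := by group
  have c3 : v * (σ i * v⁻¹) = v * σ i * v⁻¹ := by group
  rw [c3, c1] at e1
  rw [c2, hsimple] at e2
  rw [e2] at e1
  rw [e1]
  calc mu cs v (σ i) * (-1 * mu cs v⁻¹ (v * σ i * v⁻¹))
      = -(mu cs v (σ i) * mu cs v⁻¹ (v * σ i * v⁻¹)) := by
        rw [neg_one_mul, mul_neg]
    _ = -1 := by rw [key]

theorem mu_mul_reflection {t : W} (ht : cs.IsReflection t) (w : W) :
    mu cs (w * t) t = - mu cs w t := by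
  rw [mu_mul cs w t t, show t * t * t⁻¹ = t by group, mu_refl cs ht, mul_neg_one]

theorem mu_neg_of_inversion {w t : W} (ht : cs.IsReflection t) (hlt : ℓ (w * t) < ℓ w) :
    mu cs w t = -1 := by
  rcases Int.units_eq_one_or (mu cs w t) with h | h
  · exfalso
    have h2 : mu cs (w * t) t = -1 := by rw [mu_mul_reflection cs ht, h]
    obtain ⟨ω, hred, hw⟩ := cs.exists_reduced_word' (w * t)
    have hcount : (-1 : ℤˣ) ^ ((cs.rightInvSeq ω).count t) = -1 := by
      rw [← mu_eq_count, ← hw, h2]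
    have hmem : t ∈ cs.rightInvSeq ω := by
      by_contra hmem
      rw [List.count_eq_zero_of_not_mem hmem, pow_zero] at hcount
      exact absurd hcount (by decide)
    have hinv := (cs.isRightInversion_of_mem_rightInvSeq hred hmem).2
    rw [← hw] at hinv
    have hww : w * t * t = w := by rw [mul_assoc, ht.mul_self, mul_one]
    rw [hww] at hinv
    omega
  · exact h

/-- Strong exchange property. -/
theorem strongExchange {w t : W} (ht : cs.IsReflection t) (hlt : ℓ (w * t) < ℓ w)
    (ω : List B) (hw : w = π ω) :
    ∃ k < ω.length, w * t = π (ω.eraseIdx k) := by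
  have hmu : mu cs w t = -1 := mu_neg_of_inversion cs ht hlt
  have hmem : t ∈ cs.rightInvSeq ω := by
    by_contra hmem
    have hc := mu_eq_count cs ω t
    rw [← hw, hmu, List.count_eq_zero_of_not_mem hmem, pow_zero] at hc
    exact absurd hc (by decide)
  obtain ⟨k, hk, hkt⟩ := List.mem_iff_getElem.mp hmem
  refine ⟨k, by simpa using hk, ?_⟩
  rw [hw, ← cs.wordProd_mul_getD_rightInvSeq ω k]
  congr 1
  rw [List.getD_eq_getElem _ 1 hk, hkt]

theorem wordProd_take_succ (ω : List B) (n : ℕ) (hn : n < ω.length) :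
    π (ω.take (n + 1)) = π (ω.take n) * σ (ω.get ⟨n, hn⟩) := by
  rw [List.take_succ, cs.wordProd_append]
  congr 1
  rw [List.getElem?_eq_getElem hn]
  simp [CoxeterSystem.wordProd]

theorem length_take_of_no_descent (ω : List B) (N : ℕ) (hN : N ≤ ω.length)
    (h : ∀ n < N, ¬ ℓ (π (ω.take (n + 1))) < ℓ (π (ω.take n))) :
    ℓ (π (ω.take N)) = N := by
  induction N with
  | zero => simp
  | succ N ih =>
    have hNlt : N < ω.length := hN
    have hstep := wordProd_take_succ cs ω N hNlt
    have hpre := ih (le_of_lt hNlt) (fun n hn => h n (hn.trans (Nat.lt_succ_self N)))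
    rcases cs.length_mul_simple (π (ω.take N)) (ω.get ⟨N, hNlt⟩) with hup | hdown
    · rw [hstep, hup, hpre]
    · exfalso
      exact h N (Nat.lt_succ_self N) (by rw [hstep]; omega)

/-- Deletion property. -/
theorem deletion (ω : List B) (h : ℓ (π ω) < ω.length) :
    ∃ ω' : List B, ω'.length + 2 = ω.length ∧ π ω' = π ω ∧ ∀ x ∈ ω', x ∈ ω := by
  classical
  have hexists : ∃ n, n < ω.length ∧ ℓ (π (ω.take (n + 1))) < ℓ (π (ω.take n)) := by
    by_contra hc
    push_neg at hc
    have := length_take_of_no_descent cs ω ω.length le_rfl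
      (fun n hn h' => absurd h' (not_lt_of_ge (hc n hn)))
    rw [List.take_length] at this
    omega
  set n := Nat.find hexists with hndef
  obtain ⟨hn, hdesc⟩ := Nat.find_spec hexists
  have hred : ℓ (π (ω.take n)) = n := by
    apply length_take_of_no_descent cs ω n (le_of_lt hn)
    intro m hm h'
    exact Nat.find_min hexists hm ⟨hm.trans hn, h'⟩
  have hstep := wordProd_take_succ cs ω n hn
  rw [hstep] at hdesc
  obtain ⟨k, hk, hkeq⟩ := strongExchange cs (cs.isReflection_simple (ω.get ⟨n, hn⟩))
    hdesc (ω.take n) rfl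
  rw [List.length_take, min_eq_left (le_of_lt hn)] at hk
  refine ⟨(ω.take n).eraseIdx k ++ ω.drop (n + 1), ?_, ?_, ?_⟩
  · rw [List.length_append]
    have h1 : ((ω.take n).eraseIdx k).length + 1 = (ω.take n).length := by
      apply List.length_eraseIdx_add_one
      rw [List.length_take, min_eq_left (le_of_lt hn)]
      exact hk
    rw [List.length_take, min_eq_left (le_of_lt hn)] at h1
    rw [List.length_drop]
    omega
  · rw [cs.wordProd_append, ← hkeq]
    conv_rhs => rw [← List.take_append_drop (n + 1) ω]
    rw [cs.wordProd_append, hstep]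
  · intro x hx
    rcases List.mem_append.mp hx with hx | hx
    · exact List.take_subset n ω (List.eraseIdx_subset hx)
    · exact List.drop_subset _ ω hx

/-- `π` of a word with letters in `J` lies in the parabolic subgroup. -/
theorem wordProd_mem_WJ {J : Set B} {ω : List B} (hω : ∀ x ∈ ω, x ∈ J) :
    π ω ∈ Subgroup.closure (cs.simple '' J) := by
  induction ω with
  | nil => rw [cs.wordProd_nil]; exact one_mem _
  | cons i ω ih =>
    rw [cs.wordProd_cons]
    exact mul_mem (Subgroup.subset_closure ⟨i, hω i (List.mem_cons_self), rfl⟩)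
      (ih fun x hx => hω x (List.mem_cons_of_mem i hx))

theorem exists_J_word {J : Set B} {u : W} (hu : u ∈ Subgroup.closure (cs.simple '' J)) :
    ∃ ω : List B, (∀ x ∈ ω, x ∈ J) ∧ π ω = u := by
  refine Subgroup.closure_induction ?_ ?_ ?_ ?_ hu
  · rintro x ⟨i, hi, rfl⟩
    exact ⟨[i], by simpa using hi, by simp [CoxeterSystem.wordProd]⟩
  · exact ⟨[], by simp, cs.wordProd_nil⟩
  · rintro x y _ _ ⟨ω1, h1, rfl⟩ ⟨ω2, h2, rfl⟩
    refine ⟨ω1 ++ ω2, ?_, (cs.wordProd_append ω1 ω2).symm ▸ rfl⟩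
    intro z hz
    rcases List.mem_append.mp hz with hz | hz
    · exact h1 z hz
    · exact h2 z hz
  · rintro x _ ⟨ω, h1, rfl⟩
    exact ⟨ω.reverse, fun z hz => h1 z (List.mem_reverse.mp hz), cs.wordProd_reverse ω⟩

theorem exists_reduced_J_word {J : Set B} {u : W} (hu : u ∈ Subgroup.closure (cs.simple '' J)) :
    ∃ ω : List B, (∀ x ∈ ω, x ∈ J) ∧ π ω = u ∧ cs.IsReduced ω := by
  obtain ⟨ω, hJ, hprod⟩ := exists_J_word cs hu
  clear hu
  suffices h : ∀ (n : ℕ) (ω : List B), ω.length = n → (∀ x ∈ ω, x ∈ J) →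
      ∃ ω' : List B, (∀ x ∈ ω', x ∈ J) ∧ π ω' = π ω ∧ cs.IsReduced ω' by
    obtain ⟨ω', a, b, c⟩ := h ω.length ω rfl hJ
    exact ⟨ω', a, by rw [b, hprod], c⟩
  intro n
  induction n using Nat.strong_induction_on with
  | _ n ih =>
    intro ω hlen hJ
    by_cases hr : cs.IsReduced ω
    · exact ⟨ω, hJ, rfl, hr⟩
    · have hlt : ℓ (π ω) < ω.length :=
        lt_of_le_of_ne (cs.length_wordProd_le ω) hr
      obtain ⟨ω'', hl, hp, hs⟩ := deletion cs ω hlt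
      obtain ⟨ω', a, b, c⟩ := ih ω''.length (by omega) ω'' rfl (fun x hx => hJ x (hs x hx))
      exact ⟨ω', a, by rw [b, hp], c⟩

/-- Deodhar: lengths add for a minimal coset representative times a parabolic element. -/
theorem min_coset_additive {J : Set B} {w : W}
    (hw : ∀ v ∈ Subgroup.closure (cs.simple '' J), ℓ w ≤ ℓ (w * v))
    {u : W} (hu : u ∈ Subgroup.closure (cs.simple '' J)) : ℓ (w * u) = ℓ w + ℓ u := by
  obtain ⟨ω, hJ, rfl, hred⟩ := exists_reduced_J_word cs hu
  rw [hred]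
  clear hu
  suffices h : ∀ (n : ℕ) (ω : List B), ω.length = n → (∀ x ∈ ω, x ∈ J) → cs.IsReduced ω →
      ℓ (w * π ω) = ℓ w + n by
    exact h ω.length ω rfl hJ hred
  intro n
  induction n using Nat.strong_induction_on with
  | _ n ih =>
    intro ω hlen hJ hred
    rcases n with _ | n
    · rw [List.eq_nil_of_length_eq_zero hlen]
      simp
    · obtain ⟨ω', i, rfl⟩ : ∃ ω' i, ω = ω' ++ [i] := by
        rcases List.eq_nil_or_concat ω with h | ⟨ω', i, h⟩
        · rw [h] at hlen; simp at hlen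
        · exact ⟨ω', i, by rw [h, List.concat_eq_append]⟩
      have hlen' : ω'.length = n := by
        rw [List.length_append] at hlen; simpa using hlen
      have hred' : cs.IsReduced ω' := by
        have := hred.take ω'.length
        rwa [List.take_left] at this
      have hJ' : ∀ x ∈ ω', x ∈ J := fun x hx => hJ x (List.mem_append_left _ hx)
      have hiJ : i ∈ J := hJ i (List.mem_append_right _ (List.mem_singleton_self i))
      have hsingle : π [i] = σ i := by simp [CoxeterSystem.wordProd]
      have hsplit : π (ω' ++ [i]) = π ω' * σ i := by
        rw [cs.wordProd_append, hsingle]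
      have ihn := ih n (Nat.lt_succ_self n) ω' hlen' hJ' hred'
      rw [hsplit]
      rcases cs.length_mul_simple (w * π ω') i with hup | hdown
      · rw [← mul_assoc, hup, ihn]
        omega
      · exfalso
        obtain ⟨ωw, hredw, hweq⟩ := cs.exists_reduced_word' w
        have hΩprod : w * π ω' = π (ωw ++ ω') := by rw [cs.wordProd_append, ← hweq]
        have hdesc : ℓ ((w * π ω') * σ i) < ℓ (w * π ω') := by omega
        obtain ⟨k, hk, hkeq⟩ := strongExchange cs (cs.isReflection_simple i) hdesc
          (ωw ++ ω') hΩprod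
        rw [List.length_append] at hk
        have hlw : ωw.length = ℓ w := by rw [hweq, hredw]
        by_cases hcase : k < ωw.length
        · rw [List.eraseIdx_append_of_lt_length hcase] at hkeq
          rw [cs.wordProd_append] at hkeq
          have hg : w * (π ω' * σ i * (π ω')⁻¹) = π (ωw.eraseIdx k) := by
            calc w * (π ω' * σ i * (π ω')⁻¹)
                = (w * π ω' * σ i) * (π ω')⁻¹ := by group
              _ = (π (ωw.eraseIdx k) * π ω') * (π ω')⁻¹ := by rw [hkeq]
              _ = π (ωw.eraseIdx k) := by group
          have hgmem : π ω' * σ i * (π ω')⁻¹ ∈ Subgroup.closure (cs.simple '' J) :=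
            mul_mem (mul_mem (wordProd_mem_WJ cs hJ')
              (Subgroup.subset_closure ⟨i, hiJ, rfl⟩)) (inv_mem (wordProd_mem_WJ cs hJ'))
          have h1 := hw _ hgmem
          rw [hg] at h1
          have h2 : ℓ (π (ωw.eraseIdx k)) ≤ (ωw.eraseIdx k).length :=
            cs.length_wordProd_le _
          have h3 : (ωw.eraseIdx k).length + 1 = ωw.length :=
            List.length_eraseIdx_add_one hcase
          omega
        · push_neg at hcase
          rw [List.eraseIdx_append_of_length_le hcase] at hkeq
          rw [cs.wordProd_append, ← hweq] at hkeq
          rw [mul_assoc] at hkeq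
          have hcancel : π ω' * σ i = π (ω'.eraseIdx (k - ωw.length)) :=
            mul_left_cancel hkeq
          have h2 : ℓ (π ω' * σ i) ≤ (ω'.eraseIdx (k - ωw.length)).length := by
            rw [hcancel]; exact cs.length_wordProd_le _
          have h3 : (ω'.eraseIdx (k - ωw.length)).length + 1 = ω'.length :=
            List.length_eraseIdx_add_one (by omega)
          have h4 : ℓ (π (ω' ++ [i])) = n + 1 := by
            rw [hred, List.length_append, hlen']; rfl
          rw [hsplit] at h4
          omega

/-- Existence of a minimal length coset representative. -/
theorem exists_min_coset_rep (J : Set B) (g : W) :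
    ∃ u ∈ Subgroup.closure (cs.simple '' J),
      ∀ v ∈ Subgroup.closure (cs.simple '' J), ℓ (g * u) ≤ ℓ (g * u * v) := by
  classical
  have hne : {n : ℕ | ∃ u ∈ Subgroup.closure (cs.simple '' J), ℓ (g * u) = n}.Nonempty :=
    ⟨ℓ (g * 1), 1, one_mem _, rfl⟩
  obtain ⟨u, hu, hlen⟩ := Nat.sInf_mem hne
  refine ⟨u, hu, fun v hv => ?_⟩
  rw [hlen]
  exact Nat.sInf_le ⟨u * v, mul_mem hu hv, by rw [mul_assoc]⟩

/-- The key abstract lemma. -/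
theorem key_main {J : Set B} {w m u t : W} (ht : cs.IsReflection t)
    (hw : ∀ v ∈ Subgroup.closure (cs.simple '' J), ℓ w ≤ ℓ (w * v))
    (hm : ∀ v ∈ Subgroup.closure (cs.simple '' J), ℓ m ≤ ℓ (m * v))
    (hu : u ∈ Subgroup.closure (cs.simple '' J)) (hmu : m = w * t * u)
    (hlen : ℓ m = ℓ w + 1) : u = 1 := by
  have hwt : w * t = m * u⁻¹ := by rw [hmu]; group
  have hadd : ℓ (w * t) = ℓ m + ℓ u⁻¹ := by
    rw [hwt]; exact min_coset_additive cs hm (inv_mem hu)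
  obtain ⟨ωm, hredm, hmeq⟩ := cs.exists_reduced_word' m
  obtain ⟨ωu, hJu, hueq, hredu⟩ := exists_reduced_J_word cs (inv_mem hu)
  have hΩ : w * t = π (ωm ++ ωu) := by rw [cs.wordProd_append, ← hmeq, hueq, hwt]
  have hlt : ℓ ((w * t) * t) < ℓ (w * t) := by
    rw [mul_assoc, ht.mul_self, mul_one, hadd, hlen]
    omega
  obtain ⟨k, hk, hkeq⟩ := strongExchange cs ht hlt (ωm ++ ωu) hΩ
  have hwk : w = π ((ωm ++ ωu).eraseIdx k) := by
    rw [← hkeq, mul_assoc, ht.mul_self, mul_one]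
  have hlm : ωm.length = ℓ m := by rw [hmeq, hredm]
  by_cases hcase : k < ωm.length
  · rw [List.eraseIdx_append_of_lt_length hcase] at hwk
    have h1 : w * u = π (ωm.eraseIdx k) := by
      rw [cs.wordProd_append, hueq] at hwk
      calc w * u = (π (ωm.eraseIdx k) * u⁻¹) * u := by rw [← hwk]
        _ = π (ωm.eraseIdx k) := by group
    have h2 : ℓ (w * u) ≤ (ωm.eraseIdx k).length := by
      rw [h1]; exact cs.length_wordProd_le _
    have h3 : (ωm.eraseIdx k).length + 1 = ωm.length := List.length_eraseIdx_add_one hcase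
    have h4 : ℓ (w * u) = ℓ w + ℓ u := min_coset_additive cs hw hu
    have : ℓ u = 0 := by omega
    exact cs.length_eq_zero_iff.mp this
  · exfalso
    push_neg at hcase
    rw [List.eraseIdx_append_of_length_le hcase] at hwk
    have hv : π (ωu.eraseIdx (k - ωm.length)) ∈ Subgroup.closure (cs.simple '' J) :=
      wordProd_mem_WJ cs (fun x hx => hJu x (List.eraseIdx_subset hx))
    have h1 : ℓ w = ℓ (m * π (ωu.eraseIdx (k - ωm.length))) := by
      rw [hwk, cs.wordProd_append, ← hmeq]
    have h2 := min_coset_additive cs hm hv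
    omega

end CoxAux

/-- Remark 3.2. Fix `J ⊆ I_0`. If `w ∈ W_0^J` and
`β ∈ Δ_0^+ ∖ Δ_J^+` satisfy `ℓ(⌊w r_β⌋) = ℓ(w) + 1`, then `w r_β ∈ W_0^J`
(so that `⌊w r_β⌋ = w r_β`). -/
theorem length_add_one_mem_W0J (S : QBGSetting) (J : Set S.I0) (w : S.W)
    (hw : w ∈ S.W0J J) (β : S.V) (hβpos : β ∈ S.pos) (hβJ : β ∉ S.ZJ J)
    (hlen : S.cs.length (S.mcr J (w * S.rroot β)) = S.cs.length w + 1) :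
    w * S.rroot β ∈ S.W0J J ∧ S.mcr J (w * S.rroot β) = w * S.rroot β := by
  classical
  -- `t := r_β` is a reflection of the Coxeter system
  have hβroot : β ∈ S.roots := S.pos_sub hβpos
  have ht : S.cs.IsReflection (S.rroot β) := by
    have hβ' := hβroot
    rw [S.roots_def] at hβ'
    obtain ⟨v, j, hvj⟩ := hβ'
    refine ⟨v, j, ?_⟩
    rw [← hvj, S.rroot_conj v (S.α j) (S.pos_sub (S.α_pos j)), S.rroot_simple]
  -- the ε-chosen minimal coset representative satisfies its specification
  have hex : ∃ x : S.W, (∃ u ∈ S.WJ J, x = w * S.rroot β * u) ∧ x ∈ S.W0J J := by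
    obtain ⟨u, hu, hmin⟩ := CoxAux.exists_min_coset_rep S.cs J (w * S.rroot β)
    exact ⟨w * S.rroot β * u, ⟨u, hu, rfl⟩, fun v hv => hmin v hv⟩
  have hspec : (∃ u ∈ S.WJ J, S.mcr J (w * S.rroot β) = w * S.rroot β * u) ∧
      S.mcr J (w * S.rroot β) ∈ S.W0J J := Classical.epsilon_spec hex
  obtain ⟨⟨u, hu, hmeq⟩, hmem⟩ := hspec
  have hu1 : u = 1 := by
    refine CoxAux.key_main S.cs ht (J := J) (fun v hv => hw v hv) (fun v hv => hmem v hv)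
      hu hmeq ?_
    exact hlen
  rw [hu1, mul_one] at hmeq
  exact ⟨hmeq ▸ hmem, hmeq⟩
end
end

section
/- Let x, y ∈ W_0^J and let σ ∈ ℚ with 0 < σ < 1. If there exists a directed σ-path from y to x in the parabolic quantum Bruhat graph, then σ(xΛ − yΛ) is contained in Q_0 = ⊕_{j∈I_0} ℤα_j. -/
noncomputable section

open Classical

namespace QBGSetting

variable (S : QBGSetting)

lemma rep_mul_apply (a b : S.W) (v : S.V) :
    S.rep (a * b) v = S.rep a (S.rep b v) := by
  rw [map_mul]; rfl

lemma rep_one_apply (v : S.V) : S.rep 1 v = v := by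
  rw [map_one]; rfl

lemma repWJ_fix : ∀ u ∈ S.WJ S.JΛ, S.rep u S.Λ = S.Λ := by
  intro u hu
  induction hu using Subgroup.closure_induction with
  | mem x hx =>
      obtain ⟨j, hj, rfl⟩ := hx
      rw [S.simple_apply]
      have hz : S.pair S.Λ (S.α j) = 0 := hj
      rw [hz, zero_smul, sub_zero]
  | one => exact S.rep_one_apply _
  | mul a b _ _ ha hb => rw [S.rep_mul_apply, hb, ha]
  | inv a _ ha =>
      calc S.rep a⁻¹ S.Λ = S.rep a⁻¹ (S.rep a S.Λ) := by rw [ha]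
        _ = S.rep (a⁻¹ * a) S.Λ := (S.rep_mul_apply _ _ _).symm
        _ = S.Λ := by rw [inv_mul_cancel]; exact S.rep_one_apply _

lemma mcr_exists (J : Set S.I0) (w : S.W) :
    ∃ u ∈ S.WJ J, S.mcr J w = w * u := by
  have hex : ∃ x, (∃ u ∈ S.WJ J, x = w * u) ∧ x ∈ S.W0J J := by
    set L := {n : ℕ | ∃ u ∈ S.WJ J, S.cs.length (w * u) = n} with hL
    have hne : L.Nonempty := ⟨S.cs.length (w * 1), 1, one_mem _, rfl⟩
    obtain ⟨u₀, hu₀, hlen⟩ := Nat.sInf_mem hne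
    refine ⟨w * u₀, ⟨u₀, hu₀, rfl⟩, fun u hu => ?_⟩
    have hmem : S.cs.length (w * u₀ * u) ∈ L :=
      ⟨u₀ * u, mul_mem hu₀ hu, by rw [mul_assoc]⟩
    rw [hlen]
    exact Nat.sInf_le hmem
  exact (Classical.epsilon_spec hex).1

lemma roots_stable (w : S.W) {v : S.V} (hv : v ∈ S.roots) :
    S.rep w v ∈ S.roots := by
  rw [S.roots_def] at hv ⊢
  obtain ⟨u, j, hu⟩ := hv
  exact ⟨w * u, j, by rw [S.rep_mul_apply, hu]⟩

lemma alpha_mem_Q0 (j : S.I0) : S.α j ∈ S.Q0 :=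
  AddSubgroup.subset_closure (Set.mem_range_self j)

lemma rep_mem_Q0 (w : S.W) {v : S.V} (hv : v ∈ S.roots) (hvQ : v ∈ S.Q0) :
    S.rep w v ∈ S.Q0 := by
  obtain ⟨ω, rfl⟩ := S.cs.wordProd_surjective w
  induction ω with
  | nil => rw [CoxeterSystem.wordProd_nil]; rwa [S.rep_one_apply]
  | cons i ω ih =>
      rw [S.cs.wordProd_cons, S.rep_mul_apply, S.simple_apply]
      have hroot : S.rep (S.cs.wordProd ω) v ∈ S.roots := S.roots_stable _ hv
      obtain ⟨m, hm⟩ := S.pair_cryst _ hroot _ (S.pos_sub (S.α_pos i))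
      rw [hm, Int.cast_smul_eq_zsmul]
      exact sub_mem ih (zsmul_mem (S.alpha_mem_Q0 i) m)

lemma root_mem_Q0 {v : S.V} (hv : v ∈ S.roots) : v ∈ S.Q0 := by
  rw [S.roots_def] at hv
  obtain ⟨u, j, rfl⟩ := hv
  exact S.rep_mem_Q0 u (S.pos_sub (S.α_pos j)) (S.alpha_mem_Q0 j)

end QBGSetting

/-- Lemma 4.5. Let `x, y ∈ W_0^J` and `σ ∈ ℚ` with
`0 < σ < 1`.  If there is a directed `σ`-path from `y` to `x` in the
parabolic quantum Bruhat graph, then `σ (xΛ − yΛ) ∈ Q_0 = ⊕_{j ∈ I_0} ℤ α_j`. -/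
theorem sigma_path_weight_diff (S : QBGSetting) (x y : S.W)
    (hx : x ∈ S.W0J S.JΛ) (hy : y ∈ S.W0J S.JΛ)
    (σ : ℚ) (h0 : 0 < σ) (h1 : σ < 1)
    (hpath : ∃ (n : ℕ) (w : ℕ → S.W) (β : ℕ → S.V),
      S.IsDSPath S.JΛ (σ : ℝ) n w β x y) :
    (σ : ℝ) • (S.rep x S.Λ - S.rep y S.Λ) ∈ S.Q0 := by
  obtain ⟨n, w, β, ⟨⟨hw0, hwn, hstep⟩, hint⟩⟩ := hpath
  have step : ∀ k < n,
      (σ : ℝ) • (S.rep (w k) S.Λ - S.rep (w (k+1)) S.Λ) ∈ S.Q0 := by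
    intro k hk
    obtain ⟨⟨_, hβpos, _, _⟩, heq⟩ := hstep k hk
    set b := β (k+1) with hb
    have hbroot : b ∈ S.roots := S.pos_sub hβpos
    obtain ⟨u, hu, hmcr⟩ := S.mcr_exists S.JΛ (w (k+1) * S.rroot b)
    have hwk : S.rep (w k) S.Λ
        = S.rep (w (k+1)) S.Λ - S.pair S.Λ b • S.rep (w (k+1)) b := by
      rw [heq, hmcr, S.rep_mul_apply, S.repWJ_fix u hu, S.rep_mul_apply,
        S.rroot_apply b hbroot, map_sub, map_smul]
    obtain ⟨m, hm⟩ := hint k hk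
    rw [hwk, sub_sub_cancel_left, smul_neg, smul_smul, hm,
      Int.cast_smul_eq_zsmul]
    exact neg_mem (zsmul_mem (S.root_mem_Q0 (S.roots_stable _ hbroot)) m)
  rw [← hw0, ← hwn, smul_sub]
  have htel : (σ : ℝ) • S.rep (w 0) S.Λ - (σ : ℝ) • S.rep (w n) S.Λ
      = ∑ k ∈ Finset.range n,
        ((σ : ℝ) • S.rep (w k) S.Λ - (σ : ℝ) • S.rep (w (k+1)) S.Λ) :=
    (Finset.sum_range_sub' (fun k => (σ : ℝ) • S.rep (w k) S.Λ) n).symm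
  rw [htel]
  refine AddSubgroup.sum_mem _ fun k hk => ?_
  rw [← smul_sub]
  exact step k (Finset.mem_range.mp hk)
end
end
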